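/- arXiv:1801.09654 — 2 statements merged into one kernel-verified Lean document; each statement's English description precedes it below -/
import Mathlib

section
/- If fractional revival occurs between strongly cospectral vertices a and b in a connected graph at time τ, then for all eigenvalues θ_i, θ_j, θ_r, θ_s all lying in Φ_{a,b}^+ (or all in Φ_{a,b}^-) with θ_r ≠ θ_s, the ratio (θ_i - θ_j)/(θ_r - θ_s) is rational. -/
open Matrix Complex BigOperators

/-- Continuous-time quantum walk `U(t) = exp(-itA)` of a real (weighted) adjacency matrix. -/
noncomputable def qwalk {V : Type*} [Fintype V] [DecidableEq V]
    (A : Matrix V V ℝ) (t : ℝ) : Matrix V V ℂ :=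
  NormedSpace.exp ((-(Complex.I * (t : ℂ))) • A.map (fun x => (x : ℂ)))

/-- Characteristic (standard basis) vector of a vertex, over `ℂ`. -/
noncomputable def eC {V : Type*} [DecidableEq V] (a : V) : V → ℂ := Pi.single a 1

/-- Characteristic (standard basis) vector of a vertex, over `ℝ`. -/
noncomputable def eR {V : Type*} [DecidableEq V] (a : V) : V → ℝ := Pi.single a 1

lemma pow_spectral {n m : ℕ} (F : Fin m → Matrix (Fin n) (Fin n) ℂ)
    (hsum : ∑ r, F r = 1) (horth : ∀ r s, F r * F s = if r = s then F r else 0)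
    (c : Fin m → ℂ) (k : ℕ) :
    (∑ r, c r • F r) ^ k = ∑ r, (c r) ^ k • F r := by
  induction k with
  | zero => simp [hsum]
  | succ k ih =>
    rw [pow_succ, ih, Finset.sum_mul_sum, Finset.sum_comm]
    refine Finset.sum_congr rfl fun s _ => ?_
    have : ∀ r : Fin m, ((c r) ^ k • F r) * (c s • F s)
        = if r = s then ((c r) ^ k * c s) • F r else 0 := by
      intro r
      rw [smul_mul_smul_comm, horth r s]
      split <;> simp
    rw [Finset.sum_congr rfl fun r _ => this r, Finset.sum_ite_eq' Finset.univ s]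
    simp [pow_succ]

lemma exp_spectral {n m : ℕ} (F : Fin m → Matrix (Fin n) (Fin n) ℂ)
    (hsum : ∑ r, F r = 1) (horth : ∀ r s, F r * F s = if r = s then F r else 0)
    (c : Fin m → ℂ) :
    NormedSpace.exp (∑ r, c r • F r) = ∑ r, Complex.exp (c r) • F r := by
  rw [NormedSpace.exp_eq_tsum ℂ]
  simp only [pow_spectral F hsum horth c]
  have hsmul : ∀ (k : ℕ) (r : Fin m), ((k.factorial : ℂ))⁻¹ • ((c r) ^ k • F r)
      = (((k.factorial : ℂ))⁻¹ * (c r) ^ k) • F r := fun k r => smul_smul _ _ _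
  have hsummable : ∀ r : Fin m, Summable (fun k : ℕ => (((k.factorial : ℂ))⁻¹ * (c r) ^ k) • F r) := by
    intro r
    apply Summable.smul_const
    simpa [smul_eq_mul] using NormedSpace.expSeries_summable' (𝕂 := ℂ) (c r)
  calc ∑' (k : ℕ), ((k.factorial : ℂ))⁻¹ • ∑ r, (c r) ^ k • F r
      = ∑' (k : ℕ), ∑ r, (((k.factorial : ℂ))⁻¹ * (c r) ^ k) • F r := by
        simp only [Finset.smul_sum, hsmul]
    _ = ∑ r, ∑' (k : ℕ), (((k.factorial : ℂ))⁻¹ * (c r) ^ k) • F r :=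
        Summable.tsum_finsetSum (fun r _ => hsummable r)
    _ = ∑ r, Complex.exp (c r) • F r := by
        refine Finset.sum_congr rfl fun r _ => ?_
        rw [Summable.tsum_smul_const (by simpa [smul_eq_mul] using NormedSpace.expSeries_summable' (𝕂 := ℂ) (c r))]
        congr 1
        rw [Complex.exp_eq_exp_ℂ, NormedSpace.exp_eq_tsum ℂ]
        simp [smul_eq_mul]

lemma exp_eq_int (τ x y : ℝ)
    (h : Complex.exp (-(Complex.I * τ) * x) = Complex.exp (-(Complex.I * τ) * y)) :
    ∃ k : ℤ, τ * (x - y) = 2 * Real.pi * k := by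
  rw [Complex.exp_eq_exp_iff_exists_int] at h
  obtain ⟨k, hk⟩ := h
  refine ⟨-k, ?_⟩
  have hC : (Complex.I) * ((τ * (x - y) : ℝ) : ℂ) = Complex.I * ((2 * Real.pi * (-k : ℤ) : ℝ) : ℂ) := by
    push_cast
    linear_combination -hk
  have := mul_left_cancel₀ Complex.I_ne_zero hC
  exact_mod_cast this

lemma ratio_core (τ θi θj θr θs : ℝ) (hτ : τ ≠ 0)
    (hij : Complex.exp (-(Complex.I * τ) * θi) = Complex.exp (-(Complex.I * τ) * θj))
    (hrs : Complex.exp (-(Complex.I * τ) * θr) = Complex.exp (-(Complex.I * τ) * θs))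
    (hne : θr ≠ θs) : ∃ q : ℚ, θi - θj = q * (θr - θs) := by
  obtain ⟨k1, h1⟩ := exp_eq_int τ θi θj hij
  obtain ⟨k2, h2⟩ := exp_eq_int τ θr θs hrs
  have hk2 : (k2 : ℝ) ≠ 0 := by
    intro h0
    apply hne
    rw [h0, mul_zero] at h2
    rcases mul_eq_zero.mp h2 with h | h
    · exact absurd h hτ
    · linarith
  refine ⟨(k1 : ℚ) / (k2 : ℚ), ?_⟩
  have hq : (((k1 : ℚ) / (k2 : ℚ) : ℚ) : ℝ) = (k1 : ℝ) / (k2 : ℝ) := by push_cast; ring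
  rw [hq, div_mul_eq_mul_div, eq_div_iff hk2]
  apply mul_left_cancel₀ hτ
  linear_combination (k2 : ℝ) * h1 - (k1 : ℝ) * h2

lemma sum_mulVec' {n m : ℕ} (M : Fin m → Matrix (Fin n) (Fin n) ℂ) (v : Fin n → ℂ) :
    (∑ r, M r) *ᵥ v = ∑ r, M r *ᵥ v := by
  ext i
  simp [Matrix.mulVec, dotProduct, Finset.sum_apply, Matrix.sum_apply, Finset.sum_mul]
  rw [Finset.sum_comm]

lemma map_mulVec_e {n : ℕ} (M : Matrix (Fin n) (Fin n) ℝ) (a : Fin n) :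
    (M.map (fun x => (x : ℂ))) *ᵥ eC a = fun i => ((M *ᵥ eR a) i : ℂ) := by
  ext i
  simp [Matrix.mulVec, dotProduct, eC, eR, Pi.single_apply, mul_ite]

/-- Ratio condition: fractional revival between strongly cospectral vertices implies
that eigenvalue differences within Φ⁺ (resp. within Φ⁻) have rational ratios. -/
theorem stmt4 {n m : ℕ} (A : Matrix (Fin n) (Fin n) ℝ) (hA : A.IsSymm)
    (θ : Fin m → ℝ) (E : Fin m → Matrix (Fin n) (Fin n) ℝ)
    (hdecomp : A = ∑ r, θ r • E r)
    (hsum : ∑ r, E r = 1)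
    (hsymm : ∀ r, (E r).IsSymm)
    (horth : ∀ r s, E r * E s = if r = s then E r else 0)
    (a b : Fin n) (hab : a ≠ b)
    (hsc : ∀ r, E r *ᵥ eR a = E r *ᵥ eR b ∨ E r *ᵥ eR a = -(E r *ᵥ eR b))
    (τ : ℝ) (α β : ℂ) (hβ : β ≠ 0)
    (hnorm : ‖α‖ ^ 2 + ‖β‖ ^ 2 = 1)
    (hrev : (qwalk A τ) *ᵥ eC a = α • eC a + β • eC b) :
    (∀ i j r s : Fin m,
      (∀ x ∈ [i, j, r, s], E x *ᵥ eR a ≠ 0 ∧ E x *ᵥ eR a = E x *ᵥ eR b) →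
      θ r ≠ θ s → ∃ q : ℚ, θ i - θ j = q * (θ r - θ s)) ∧
    (∀ i j r s : Fin m,
      (∀ x ∈ [i, j, r, s], E x *ᵥ eR a ≠ 0 ∧ E x *ᵥ eR a = -(E x *ᵥ eR b)) →
      θ r ≠ θ s → ∃ q : ℚ, θ i - θ j = q * (θ r - θ s)) := by
  classical
  set F : Fin m → Matrix (Fin n) (Fin n) ℂ := fun r => (E r).map (fun x => (x : ℂ)) with hF
  -- basic facts about F
  have hFsum : ∑ r, F r = 1 := by
    ext i j
    have h1 : (∑ r, E r) i j = (1 : Matrix (Fin n) (Fin n) ℝ) i j := by rw [hsum]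
    simp only [Matrix.sum_apply, Matrix.one_apply] at h1 ⊢
    simp only [hF, Matrix.map_apply, ← Complex.ofReal_sum, h1]
    split <;> simp
  have hForth : ∀ r s, F r * F s = if r = s then F r else 0 := by
    intro r s
    have hmm : F r * F s = (E r * E s).map (fun x => (x : ℂ)) :=
      (Matrix.map_mul (f := Complex.ofRealHom)).symm
    rw [hmm, horth]
    split <;> · ext i j; simp [hF, Matrix.map_apply]
  have hM : (-(Complex.I * (τ : ℂ))) • A.map (fun x => (x : ℂ))
      = ∑ r, (-(Complex.I * (τ : ℂ)) * (θ r : ℂ)) • F r := by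
    ext i j
    simp only [Matrix.smul_apply, Matrix.map_apply, Matrix.sum_apply, hdecomp, hF,
      smul_eq_mul]
    push_cast
    rw [Finset.mul_sum]
    exact Finset.sum_congr rfl fun r _ => by ring
  have hW : qwalk A τ = ∑ r, Complex.exp (-(Complex.I * (τ : ℂ)) * (θ r : ℂ)) • F r := by
    rw [qwalk, hM, exp_spectral F hFsum hForth]
  -- τ ≠ 0
  have hτ : τ ≠ 0 := by
    intro h0
    subst h0
    have : qwalk A 0 = 1 := by
      rw [hW]
      simpa using hFsum
    rw [this, Matrix.one_mulVec] at hrev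
    have hb := congrFun hrev b
    have h1 : eC a b = 0 := by simp [eC, Pi.single_apply, Ne.symm hab]
    have h2 : eC (V := Fin n) b b = 1 := by simp [eC]
    rw [Pi.add_apply, Pi.smul_apply, Pi.smul_apply, h1, h2] at hb
    simp at hb
    exact hβ hb.symm
  -- key scalar equations
  have key : ∀ t : Fin m, E t *ᵥ eR a ≠ 0 →
      ((E t *ᵥ eR a = E t *ᵥ eR b → Complex.exp (-(Complex.I * (τ : ℂ)) * (θ t : ℂ)) = α + β) ∧
       (E t *ᵥ eR a = -(E t *ᵥ eR b) → Complex.exp (-(Complex.I * (τ : ℂ)) * (θ t : ℂ)) = α - β)) := by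
    intro t hta
    -- project the revival equation onto F t
    have hproj := congrArg (fun v => F t *ᵥ v) hrev
    simp only [Matrix.mulVec_mulVec] at hproj
    have hFtW : F t * qwalk A τ
        = Complex.exp (-(Complex.I * (τ : ℂ)) * (θ t : ℂ)) • F t := by
      rw [hW, Finset.mul_sum]
      have : ∀ r : Fin m, F t * (Complex.exp (-(Complex.I * (τ : ℂ)) * (θ r : ℂ)) • F r)
          = if t = r then Complex.exp (-(Complex.I * (τ : ℂ)) * (θ r : ℂ)) • F t else 0 := by
        intro r
        rw [mul_smul_comm, hForth t r]
        split <;> simp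
      rw [Finset.sum_congr rfl fun r _ => this r, Finset.sum_ite_eq Finset.univ t]
      simp
    rw [hFtW, Matrix.smul_mulVec, Matrix.mulVec_add, Matrix.mulVec_smul,
      Matrix.mulVec_smul] at hproj
    have hFa : F t *ᵥ eC a = fun i => (((E t *ᵥ eR a) i : ℝ) : ℂ) := map_mulVec_e (E t) a
    have hFb : F t *ᵥ eC b = fun i => (((E t *ᵥ eR b) i : ℝ) : ℂ) := map_mulVec_e (E t) b
    set v : Fin n → ℂ := fun i => (((E t *ᵥ eR a) i : ℝ) : ℂ) with hvdef
    have hvne : v ≠ 0 := by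
      intro h
      apply hta
      ext i
      have := congrFun h i
      simpa [hvdef] using this
    have cancel : ∀ c d : ℂ, c • v = d • v → c = d := by
      intro c d h
      have h2 : (c - d) • v = 0 := by rw [sub_smul, h, sub_self]
      rcases smul_eq_zero.mp h2 with h' | h'
      · exact sub_eq_zero.mp h'
      · exact absurd h' hvne
    constructor
    · intro hpos
      apply cancel
      have hFb2 : F t *ᵥ eC b = v := by rw [hFb, hvdef, ← hpos]
      rw [hFa, hFb2] at hproj
      rw [hproj, add_smul]
    · intro hneg
      apply cancel
      have hFb' : F t *ᵥ eC b = -v := by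
        rw [hFb]
        ext i
        have : (E t *ᵥ eR b) i = -((E t *ᵥ eR a) i) := by
          have := congrFun hneg i
          simp only [Pi.neg_apply] at this
          linarith
        simp [hvdef, this]
      rw [hFa, hFb'] at hproj
      rw [hproj, sub_smul, smul_neg, sub_eq_add_neg]
    -- done key
  constructor
  · intro i j r s hlist hne
    obtain ⟨hia, hip⟩ := hlist i (by simp)
    obtain ⟨hja, hjp⟩ := hlist j (by simp)
    obtain ⟨hra, hrp⟩ := hlist r (by simp)
    obtain ⟨hsa, hsp⟩ := hlist s (by simp)
    have ei := (key i hia).1 hip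
    have ej := (key j hja).1 hjp
    have er := (key r hra).1 hrp
    have es := (key s hsa).1 hsp
    exact ratio_core τ (θ i) (θ j) (θ r) (θ s) hτ (by rw [ei, ej]) (by rw [er, es]) hne
  · intro i j r s hlist hne
    obtain ⟨hia, hip⟩ := hlist i (by simp)
    obtain ⟨hja, hjp⟩ := hlist j (by simp)
    obtain ⟨hra, hrp⟩ := hlist r (by simp)
    obtain ⟨hsa, hsp⟩ := hlist s (by simp)
    have ei := (key i hia).2 hip
    have ej := (key j hja).2 hjp
    have er := (key r hra).2 hrp
    have es := (key s hsa).2 hsp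
    exact ratio_core τ (θ i) (θ j) (θ r) (θ s) hτ (by rw [ei, ej]) (by rw [er, es]) hne
end

section
/- Let Y have perfect state transfer between a and b at time π/2 and let T be an order-two automorphism of Y swapping a and b. Define A(X_θ) = I⊗A(Y) + cos(2θ)(σ_X⊗I) + sin(2θ)(σ_Z⊗T). Then exp(-i(π/2)A(X_θ)) e_{(0,a)} = −i sin(2θ) e_{(0,a)} − i cos(2θ) e_{(1,b)}. -/
set_option linter.unusedSectionVars false

open Matrix Complex BigOperators

open Kronecker

section aux

variable {m n : Type*} [Fintype m] [Fintype n] [DecidableEq m] [DecidableEq n]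

private lemma cmap_add (X Y : Matrix m n ℝ) :
    (X + Y).map (fun x : ℝ => (x : ℂ)) = X.map (fun x : ℝ => (x : ℂ)) + Y.map (fun x : ℝ => (x : ℂ)) := by
  ext i j; simp [Matrix.map_apply]

private lemma cmap_smul (r : ℝ) (X : Matrix m n ℝ) :
    (r • X).map (fun x : ℝ => (x : ℂ)) = (r : ℂ) • X.map (fun x : ℝ => (x : ℂ)) := by
  ext i j; simp [Matrix.map_apply]

private lemma cmap_mul (X Y : Matrix m m ℝ) :
    (X * Y).map (fun x : ℝ => (x : ℂ)) = X.map (fun x : ℝ => (x : ℂ)) * Y.map (fun x : ℝ => (x : ℂ)) := by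
  ext i j; simp [Matrix.map_apply, Matrix.mul_apply]

private lemma cmap_one :
    (1 : Matrix m m ℝ).map (fun x : ℝ => (x : ℂ)) = 1 :=
  Matrix.map_one _ (by simp) (by simp)

private lemma cmap_kron {m' n' : Type*} (X : Matrix m m' ℝ) (Y : Matrix n n' ℝ) :
    (X ⊗ₖ Y).map (fun x : ℝ => (x : ℂ)) = X.map (fun x : ℝ => (x : ℂ)) ⊗ₖ Y.map (fun x : ℝ => (x : ℂ)) := by
  ext i j; simp [Matrix.map_apply, Matrix.kroneckerMap_apply]

private lemma cmulVec_map (X : Matrix m m ℝ) (v : m → ℝ) :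
    (X.map (fun x : ℝ => (x : ℂ))) *ᵥ (fun i => ((v i : ℝ) : ℂ)) = fun i => (((X *ᵥ v) i : ℝ) : ℂ) := by
  funext i
  simp [Matrix.mulVec, dotProduct, Matrix.map_apply]

private lemma eCeR (a : m) : eC a = fun i => ((eR a i : ℝ) : ℂ) := by
  funext i
  by_cases h : i = a <;> simp [eC, eR, Pi.single_apply, h]

/-- exp of a (scaled) involution. -/
private lemma exp_smul_involution (P : Matrix m m ℂ) (hP : P * P = 1) (z : ℂ) :
    NormedSpace.exp ((-(Complex.I * z)) • P)
      = Complex.cos z • (1 : Matrix m m ℂ) + (-(Complex.I * Complex.sin z)) • P := by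
  letI : SeminormedRing (Matrix m m ℂ) := Matrix.linftyOpSemiNormedRing
  letI : NormedRing (Matrix m m ℂ) := Matrix.linftyOpNormedRing
  letI : NormedAlgebra ℂ (Matrix m m ℂ) := Matrix.linftyOpNormedAlgebra
  have h2 : ∀ k : ℕ, P ^ (2 * k) = 1 := fun k => by
    rw [pow_mul, pow_two, hP, one_pow]
  have h21 : ∀ k : ℕ, P ^ (2 * k + 1) = P := fun k => by
    rw [pow_succ, h2, one_mul]
  have hx2 : (-(Complex.I * z)) ^ 2 = -(z ^ 2) := by
    rw [neg_pow, mul_pow, Complex.I_sq]; ring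
  have hxe : ∀ k : ℕ, (-(Complex.I * z)) ^ (2 * k) = (-1 : ℂ) ^ k * z ^ (2 * k) := fun k => by
    rw [pow_mul, hx2, neg_pow, pow_mul]
  rw [NormedSpace.exp_eq_tsum ℂ]
  refine HasSum.tsum_eq ?_
  refine HasSum.even_add_odd ?_ ?_
  · have h := (Complex.hasSum_cos z).smul_const (1 : Matrix m m ℂ)
    have he : (fun k : ℕ => (((2 * k).factorial : ℂ))⁻¹ • ((-(Complex.I * z)) • P) ^ (2 * k))
        = fun k : ℕ => ((-1 : ℂ) ^ k * z ^ (2 * k) / ((2 * k).factorial : ℂ)) • (1 : Matrix m m ℂ) := by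
      funext k
      rw [smul_pow, h2, smul_smul, hxe]
      congr 1
      rw [div_eq_inv_mul]
    rw [he]
    exact h
  · have h := ((Complex.hasSum_sin z).mul_left (-(Complex.I))).smul_const P
    have ho : (fun k : ℕ => (((2 * k + 1).factorial : ℂ))⁻¹ • ((-(Complex.I * z)) • P) ^ (2 * k + 1))
        = fun k : ℕ => (-(Complex.I) * ((-1 : ℂ) ^ k * z ^ (2 * k + 1) / ((2 * k + 1).factorial : ℂ))) • P := by
      funext k
      rw [smul_pow, h21, smul_smul]
      congr 1
      rw [pow_succ, hxe, div_eq_inv_mul]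
      ring
    rw [ho]
    rw [neg_mul] at h
    exact h

/-- the `X ↦ 1 ⊗ₖ X` algebra homomorphism. -/
private noncomputable def kronAlg (m n : Type*) [Fintype m] [Fintype n] [DecidableEq m]
    [DecidableEq n] :
    Matrix n n ℂ →ₐ[ℂ] Matrix (m × n) (m × n) ℂ :=
  AlgHom.mk'
    { toFun := fun X => (1 : Matrix m m ℂ) ⊗ₖ X
      map_one' := Matrix.one_kronecker_one
      map_mul' := fun X Y => by rw [← Matrix.mul_kronecker_mul, one_mul]
      map_zero' := Matrix.kronecker_zero _
      map_add' := fun X Y => Matrix.kronecker_add _ _ _ }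
    (fun r X => by
      ext ⟨i, w⟩ ⟨j, v⟩
      simp [Matrix.kroneckerMap_apply, Matrix.smul_apply, smul_eq_mul]
      ring)

private lemma exp_one_kron (X : Matrix n n ℂ) :
    NormedSpace.exp ((1 : Matrix m m ℂ) ⊗ₖ X)
      = (1 : Matrix m m ℂ) ⊗ₖ NormedSpace.exp X := by
  letI : SeminormedRing (Matrix n n ℂ) := Matrix.linftyOpSemiNormedRing
  letI : NormedRing (Matrix n n ℂ) := Matrix.linftyOpNormedRing
  letI : NormedAlgebra ℂ (Matrix n n ℂ) := Matrix.linftyOpNormedAlgebra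
  letI : SeminormedRing (Matrix (m × n) (m × n) ℂ) := Matrix.linftyOpSemiNormedRing
  letI : NormedRing (Matrix (m × n) (m × n) ℂ) := Matrix.linftyOpNormedRing
  letI : NormedAlgebra ℂ (Matrix (m × n) (m × n) ℂ) := Matrix.linftyOpNormedAlgebra
  letI : NormedAlgebra ℚ (Matrix n n ℂ) := Matrix.linftyOpNormedAlgebra
  letI : NormedAlgebra ℚ (Matrix (m × n) (m × n) ℂ) := Matrix.linftyOpNormedAlgebra
  have hc : Continuous (kronAlg m n) :=
    LinearMap.continuous_of_finiteDimensional (kronAlg m n).toLinearMap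
  exact (NormedSpace.map_exp (kronAlg m n) hc X).symm

end aux

/-- Isospectral deformation: if Y has perfect state transfer between a and b at time π/2
and T is an order-two automorphism of Y swapping a and b, then
X_θ = I⊗Y + cos(2θ)(σ_X⊗I) + sin(2θ)(σ_Z⊗T) has
(−i sin 2θ, −i cos 2θ)-revival between (0,a) and (1,b) at time π/2. -/
theorem stmt11 {n : ℕ} (A T : Matrix (Fin n) (Fin n) ℝ) (hA : A.IsSymm)
    (hTperm : ∃ σ : Equiv.Perm (Fin n), T = σ.permMatrix ℝ)
    (hT2 : T * T = 1) (hTA : T * A = A * T)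
    (a b : Fin n) (hab : a ≠ b) (hTab : T *ᵥ eR a = eR b)
    (hpst : (qwalk A (Real.pi / 2)) *ᵥ eC a = eC b)
    (θ : ℝ) :
    (qwalk ((1 : Matrix (Fin 2) (Fin 2) ℝ) ⊗ₖ A +
        Real.cos (2 * θ) • (!![0, 1; 1, 0] ⊗ₖ (1 : Matrix (Fin n) (Fin n) ℝ)) +
        Real.sin (2 * θ) • (!![1, 0; 0, -1] ⊗ₖ T)) (Real.pi / 2)) *ᵥ
      eC ((0 : Fin 2), a) =
    (-(Complex.I) * Real.sin (2 * θ)) • eC ((0 : Fin 2), a) +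
    (-(Complex.I) * Real.cos (2 * θ)) • eC ((1 : Fin 2), b) := by
  classical
  set c : ℝ := Real.cos (2 * θ) with hc
  set s : ℝ := Real.sin (2 * θ) with hs
  set Ac : Matrix (Fin n) (Fin n) ℂ := A.map (fun x : ℝ => (x : ℂ)) with hAc
  set Tc : Matrix (Fin n) (Fin n) ℂ := T.map (fun x : ℝ => (x : ℂ)) with hTc
  set σX : Matrix (Fin 2) (Fin 2) ℂ := !![0, 1; 1, 0] with hσX
  set σZ : Matrix (Fin 2) (Fin 2) ℂ := !![1, 0; 0, -1] with hσZ
  set X1 : Matrix (Fin 2 × Fin n) (Fin 2 × Fin n) ℂ := σX ⊗ₖ (1 : Matrix (Fin n) (Fin n) ℂ) with hX1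
  set Z1 : Matrix (Fin 2 × Fin n) (Fin 2 × Fin n) ℂ := σZ ⊗ₖ Tc with hZ1
  set B : Matrix (Fin 2 × Fin n) (Fin 2 × Fin n) ℂ := (1 : Matrix (Fin 2) (Fin 2) ℂ) ⊗ₖ Ac with hB
  set P : Matrix (Fin 2 × Fin n) (Fin 2 × Fin n) ℂ := (c : ℂ) • X1 + (s : ℂ) • Z1 with hP
  set u : ℂ := -(Complex.I * ((Real.pi / 2 : ℝ) : ℂ)) with hu
  set U : Matrix (Fin n) (Fin n) ℂ := qwalk A (Real.pi / 2) with hU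
  -- mapped matrix
  have hmap : ((1 : Matrix (Fin 2) (Fin 2) ℝ) ⊗ₖ A +
        c • (!![0, 1; 1, 0] ⊗ₖ (1 : Matrix (Fin n) (Fin n) ℝ)) +
        s • (!![1, 0; 0, -1] ⊗ₖ T)).map (fun x : ℝ => (x : ℂ)) = B + P := by
    rw [cmap_add, cmap_add, cmap_smul, cmap_smul,
      cmap_kron, cmap_kron, cmap_kron, cmap_one, cmap_one]
    have h1 : (!![0, 1; 1, 0] : Matrix (Fin 2) (Fin 2) ℝ).map (fun x : ℝ => (x : ℂ)) = σX := by
      ext i j; fin_cases i <;> fin_cases j <;> simp [Matrix.map_apply, hσX]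
    have h2 : (!![1, 0; 0, -1] : Matrix (Fin 2) (Fin 2) ℝ).map (fun x : ℝ => (x : ℂ)) = σZ := by
      ext i j; fin_cases i <;> fin_cases j <;> simp [Matrix.map_apply, hσZ]
    rw [h1, h2, hB, hP, hX1, hZ1, hAc, hTc, add_assoc]
  -- commutation facts
  have hTAc : Tc * Ac = Ac * Tc := by
    rw [hTc, hAc, ← cmap_mul, ← cmap_mul, hTA]
  have hT2c : Tc * Tc = 1 := by
    rw [hTc, ← cmap_mul, hT2, cmap_one]
  have hcomm : Commute B P := by
    have h1 : Commute B X1 := by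
      show B * X1 = X1 * B
      rw [hB, hX1, ← Matrix.mul_kronecker_mul, ← Matrix.mul_kronecker_mul,
        one_mul, mul_one, one_mul, mul_one]
    have h2 : Commute B Z1 := by
      show B * Z1 = Z1 * B
      rw [hB, hZ1, ← Matrix.mul_kronecker_mul, ← Matrix.mul_kronecker_mul,
        one_mul, mul_one, hTAc]
    exact (h1.smul_right _).add_right (h2.smul_right _)
  -- P is an involution
  have hX1sq : X1 * X1 = 1 := by
    rw [hX1, ← Matrix.mul_kronecker_mul, one_mul]
    have hxx : σX * σX = 1 := by
      ext i j
      fin_cases i <;> fin_cases j <;>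
        simp [hσX, Matrix.mul_apply, Fin.sum_univ_two, Matrix.one_apply]
    rw [hxx, Matrix.one_kronecker_one]
  have hZ1sq : Z1 * Z1 = 1 := by
    rw [hZ1, ← Matrix.mul_kronecker_mul, hT2c]
    have hzz : σZ * σZ = 1 := by
      ext i j
      fin_cases i <;> fin_cases j <;>
        simp [hσZ, Matrix.mul_apply, Fin.sum_univ_two, Matrix.one_apply]
    rw [hzz, Matrix.one_kronecker_one]
  have hXZ : X1 * Z1 + Z1 * X1 = 0 := by
    rw [hX1, hZ1, ← Matrix.mul_kronecker_mul, ← Matrix.mul_kronecker_mul, one_mul, mul_one,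
      ← Matrix.add_kronecker]
    have hxz : σX * σZ + σZ * σX = 0 := by
      ext i j
      fin_cases i <;> fin_cases j <;>
        simp [hσX, hσZ, Matrix.mul_apply, Fin.sum_univ_two]
    rw [hxz, Matrix.zero_kronecker]
  have hcs : (c : ℂ) * (c : ℂ) + (s : ℂ) * (s : ℂ) = 1 := by
    have h : c * c + s * s = 1 := by
      have := Real.sin_sq_add_cos_sq (2 * θ)
      rw [hc, hs]; nlinarith [this]
    exact_mod_cast h
  have hPsq : P * P = 1 := by
    have hexpand : P * P = ((c : ℂ) * (c : ℂ)) • (X1 * X1)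
        + ((c : ℂ) * (s : ℂ)) • (X1 * Z1 + Z1 * X1)
        + ((s : ℂ) * (s : ℂ)) • (Z1 * Z1) := by
      rw [hP]
      simp only [add_mul, mul_add, smul_mul_smul_comm, smul_add]
      module
    rw [hexpand, hX1sq, hXZ, hZ1sq, smul_zero, add_zero, ← add_smul, hcs, one_smul]
  -- the standard basis vector computations
  have hTcol : ∀ w, Tc w a = eC b w := by
    intro w
    have h1 : Tc *ᵥ eC a = eC b := by
      rw [eCeR a, hTc, cmulVec_map, hTab]
      exact (eCeR b).symm
    have := congrFun h1 w
    simpa [eC, Matrix.mulVec_single] using this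
  have hUcolA : ∀ w, U w a = eC b w := by
    intro w
    have := congrFun hpst w
    simpa [eC, Matrix.mulVec_single, hU] using this
  have hUb : U *ᵥ eC b = eC a := by
    have hTvec : Tc *ᵥ eC a = eC b := funext fun w => by
      simp [eC, Matrix.mulVec_single, hTcol w]
    have hcommT : Commute (u • Ac) Tc := (Commute.smul_left hTAc.symm u)
    have hUT : U * Tc = Tc * U := by
      have : U = NormedSpace.exp (u • Ac) := by rw [hU, qwalk, hu, hAc]
      rw [this]
      exact (hcommT.exp_left)
    calc U *ᵥ eC b = U *ᵥ (Tc *ᵥ eC a) := by rw [hTvec]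
      _ = (U * Tc) *ᵥ eC a := by rw [Matrix.mulVec_mulVec]
      _ = (Tc * U) *ᵥ eC a := by rw [hUT]
      _ = Tc *ᵥ (U *ᵥ eC a) := by rw [Matrix.mulVec_mulVec]
      _ = Tc *ᵥ eC b := by rw [hU] at hpst ⊢; rw [hpst]
      _ = Tc *ᵥ (Tc *ᵥ eC a) := by rw [hTvec]
      _ = (Tc * Tc) *ᵥ eC a := by rw [Matrix.mulVec_mulVec]
      _ = eC a := by rw [hT2c, Matrix.one_mulVec]
  have hUcolB : ∀ w, U w b = eC a w := by
    intro w
    have := congrFun hUb w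
    simpa [eC, Matrix.mulVec_single] using this
  -- exponentials
  have hexpP : NormedSpace.exp (u • P) = (-(Complex.I)) • P := by
    rw [hu, exp_smul_involution P hPsq, ← Complex.ofReal_cos, ← Complex.ofReal_sin,
      Real.cos_pi_div_two, Real.sin_pi_div_two]
    simp
  have hexpB : NormedSpace.exp (u • B) = (1 : Matrix (Fin 2) (Fin 2) ℂ) ⊗ₖ U := by
    rw [hB, ← Matrix.kronecker_smul, exp_one_kron, hU, qwalk, hu, hAc]
  have hkey : qwalk ((1 : Matrix (Fin 2) (Fin 2) ℝ) ⊗ₖ A +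
        c • (!![0, 1; 1, 0] ⊗ₖ (1 : Matrix (Fin n) (Fin n) ℝ)) +
        s • (!![1, 0; 0, -1] ⊗ₖ T)) (Real.pi / 2)
      = ((1 : Matrix (Fin 2) (Fin 2) ℂ) ⊗ₖ U) * ((-(Complex.I)) • P) := by
    rw [qwalk, hmap, ← hu]
    rw [smul_add]
    rw [Matrix.exp_add_of_commute _ _ ((hcomm.smul_left u).smul_right u), hexpB, hexpP]
  -- column computations
  have hX1e : X1 *ᵥ eC ((0 : Fin 2), a) = eC ((1 : Fin 2), a) := by
    funext p
    obtain ⟨i, w⟩ := p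
    simp only [eC, Matrix.mulVec_single]
    fin_cases i <;>
      simp [hX1, hσX, Matrix.kroneckerMap_apply, Matrix.one_apply, Pi.single_apply,
        Prod.ext_iff] <;> tauto
  have hZ1e : Z1 *ᵥ eC ((0 : Fin 2), a) = eC ((0 : Fin 2), b) := by
    funext p
    obtain ⟨i, w⟩ := p
    simp only [eC, Matrix.mulVec_single]
    have h := hTcol w
    simp only [eC] at h
    fin_cases i <;>
      simp [hZ1, hσZ, Matrix.kroneckerMap_apply, Pi.single_apply, Prod.ext_iff, h] <;> tauto
  have h1Ua : ((1 : Matrix (Fin 2) (Fin 2) ℂ) ⊗ₖ U) *ᵥ eC ((1 : Fin 2), a) = eC ((1 : Fin 2), b) := by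
    funext p
    obtain ⟨i, w⟩ := p
    simp only [eC, Matrix.mulVec_single]
    have h := hUcolA w
    simp only [eC] at h
    fin_cases i <;>
      simp [Matrix.kroneckerMap_apply, Matrix.one_apply, Pi.single_apply, Prod.ext_iff, h] <;>
      tauto
  have h1Ub : ((1 : Matrix (Fin 2) (Fin 2) ℂ) ⊗ₖ U) *ᵥ eC ((0 : Fin 2), b) = eC ((0 : Fin 2), a) := by
    funext p
    obtain ⟨i, w⟩ := p
    simp only [eC, Matrix.mulVec_single]
    have h := hUcolB w
    simp only [eC] at h
    fin_cases i <;>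
      simp [Matrix.kroneckerMap_apply, Matrix.one_apply, Pi.single_apply, Prod.ext_iff, h] <;>
      tauto
  have hPe : P *ᵥ eC ((0 : Fin 2), a) = (c : ℂ) • eC ((1 : Fin 2), a) + (s : ℂ) • eC ((0 : Fin 2), b) := by
    rw [hP, Matrix.add_mulVec, Matrix.smul_mulVec, Matrix.smul_mulVec, hX1e, hZ1e]
  rw [hkey, ← Matrix.mulVec_mulVec, Matrix.smul_mulVec, hPe, smul_add,
    Matrix.mulVec_add, Matrix.mulVec_smul, Matrix.mulVec_smul, Matrix.mulVec_smul,
    Matrix.mulVec_smul, h1Ua, h1Ub, smul_smul, smul_smul, add_comm]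
end
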